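/- Fix constants τ > 0 and Θ₀ > 0 and ε > 0, and for ξ ∈ ℝ³ with ξ ≠ 0 set ω = ξ/|ξ| and Θ(ξ) = Θ₀ + (ε²/12)|ξ|². Define the 4×4 real block matrices A_S(ξ) = √Θ(ξ) [[0, ωᵀ], [ω, 0₃]], B_S = [[0, 0], [0, (1/τ) I₃]], and K_S(ξ) = (1/(6 τ √Θ(ξ))) [[0, ωᵀ], [−ω, 0₃]]. Then for every ξ ≠ 0: (a) K_S(ξ) is skew-symmetric; (b) [K_S(ξ) A_S(ξ)]^s + B_S ≥ (1/(6τ)) I₄, i.e., the symmetric matrix [K_S(ξ)A_S(ξ)]^s + B_S − (1/(6τ))I₄ is positive semidefinite; and (c) the pair (A_S(ξ), B_S) is genuinely coupled, i.e., for every μ ∈ ℝ and every ψ ∈ ℝ⁴ with ψ ≠ 0 and B_S ψ = 0, one has (μI + A_S(ξ))ψ ≠ 0. -/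

import Mathlib

open Matrix

/-- Genuine coupling of a pair of real matrices `(A, B)`: no eigenvector of `A`
lies in the kernel of `B`. -/
def GenuinelyCoupled {n : ℕ} (A B : Matrix (Fin n) (Fin n) ℝ) : Prop :=
  ∀ (μ : ℝ) (ψ : Fin n → ℝ), ψ ≠ 0 → B *ᵥ ψ = 0 →
    (μ • (1 : Matrix (Fin n) (Fin n) ℝ) + A) *ᵥ ψ ≠ 0

/-- The symmetric part `[M]ˢ = (1/2)(M + Mᵀ)` of a real square matrix. -/
noncomputable def symPart {n : ℕ} (M : Matrix (Fin n) (Fin n) ℝ) :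
    Matrix (Fin n) (Fin n) ℝ :=
  (1 / 2 : ℝ) • (M + Mᵀ)

lemma qhd_prod (a b c : ℝ) :
    !![(0:ℝ), a, b, c; -a, 0, 0, 0; -b, 0, 0, 0; -c, 0, 0, 0] *
      !![(0:ℝ), a, b, c; a, 0, 0, 0; b, 0, 0, 0; c, 0, 0, 0] =
    !![a^2 + b^2 + c^2, 0, 0, 0;
       0, -(a*a), -(a*b), -(a*c);
       0, -(b*a), -(b*b), -(b*c);
       0, -(c*a), -(c*b), -(c*c)] := by
  ext i j
  fin_cases i <;> fin_cases j <;>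
    simp [Matrix.mul_apply, Fin.sum_univ_four, Matrix.vecHead, Matrix.vecTail] <;> ring

set_option maxHeartbeats 1000000 in
lemma qhd_posSemidef (τ a b c s : ℝ) (hτ : 0 < τ) (hs : 0 < s)
    (h : a^2 + b^2 + c^2 = 1) :
    (symPart (((1 / (6 * τ * s)) •
        !![(0:ℝ), a, b, c; -a, 0, 0, 0; -b, 0, 0, 0; -c, 0, 0, 0]) *
      (s • !![(0:ℝ), a, b, c; a, 0, 0, 0; b, 0, 0, 0; c, 0, 0, 0])) +
      !![(0:ℝ), 0, 0, 0; 0, 1/τ, 0, 0; 0, 0, 1/τ, 0; 0, 0, 0, 1/τ] -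
      (1 / (6 * τ)) • (1 : Matrix (Fin 4) (Fin 4) ℝ)).PosSemidef := by
  have hτ' : τ ≠ 0 := ne_of_gt hτ
  have hs' : s ≠ 0 := ne_of_gt hs
  have hKA : ((1 / (6 * τ * s)) •
        !![(0:ℝ), a, b, c; -a, 0, 0, 0; -b, 0, 0, 0; -c, 0, 0, 0]) *
      (s • !![(0:ℝ), a, b, c; a, 0, 0, 0; b, 0, 0, 0; c, 0, 0, 0]) =
      (1 / (6 * τ)) • !![(1:ℝ), 0, 0, 0;
       0, -(a*a), -(a*b), -(a*c);
       0, -(b*a), -(b*b), -(b*c);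
       0, -(c*a), -(c*b), -(c*c)] := by
    rw [Matrix.smul_mul, Matrix.mul_smul, qhd_prod, h, smul_smul]
    congr 1
    field_simp
  rw [hKA]
  set d := 1 / (6 * τ) with hd
  have hdpos : 0 < d := by positivity
  have hM : symPart (d • !![(1:ℝ), 0, 0, 0;
       0, -(a*a), -(a*b), -(a*c);
       0, -(b*a), -(b*b), -(b*c);
       0, -(c*a), -(c*b), -(c*c)]) +
      !![(0:ℝ), 0, 0, 0; 0, 1/τ, 0, 0; 0, 0, 1/τ, 0; 0, 0, 0, 1/τ] -
      d • (1 : Matrix (Fin 4) (Fin 4) ℝ) =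
      !![(0:ℝ), 0, 0, 0;
         0, 1/τ - d - d*(a*a), -(d*(a*b)), -(d*(a*c));
         0, -(d*(a*b)), 1/τ - d - d*(b*b), -(d*(b*c));
         0, -(d*(a*c)), -(d*(b*c)), 1/τ - d - d*(c*c)] := by
    ext i j
    fin_cases i <;> fin_cases j <;>
      simp [symPart, Matrix.one_apply, Matrix.vecHead, Matrix.vecTail,
        Matrix.transpose_apply, Matrix.smul_apply, Matrix.sub_apply, Matrix.add_apply] <;> ring
  rw [hM]
  refine Matrix.PosSemidef.of_dotProduct_mulVec_nonneg ?_ ?_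
  · ext i j
    fin_cases i <;> fin_cases j <;>
      simp [Matrix.vecHead, Matrix.vecTail] <;> ring
  · intro x
    have hx : star x = x := star_trivial x
    rw [hx]
    simp [Matrix.mulVec, dotProduct, Fin.sum_univ_four,
      Matrix.vecHead, Matrix.vecTail]
    have h1τ : τ⁻¹ = 6 * d := by rw [hd]; field_simp
    have hcs : (a * x 1 + b * x 2 + c * x 3)^2 ≤ x 1 ^2 + x 2 ^2 + x 3 ^2 := by
      nlinarith [sq_nonneg (a * x 2 - b * x 1), sq_nonneg (a * x 3 - c * x 1),
        sq_nonneg (b * x 3 - c * x 2)]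
    rw [h1τ]
    nlinarith [mul_le_mul_of_nonneg_left hcs hdpos.le,
      mul_nonneg hdpos.le (add_nonneg (add_nonneg (sq_nonneg (x 1)) (sq_nonneg (x 2))) (sq_nonneg (x 3)))]

lemma qhd_coupled (τ a b c s : ℝ) (hτ : 0 < τ) (hs : 0 < s)
    (habc : a ≠ 0 ∨ b ≠ 0 ∨ c ≠ 0) :
    GenuinelyCoupled
      (s • !![(0:ℝ), a, b, c; a, 0, 0, 0; b, 0, 0, 0; c, 0, 0, 0])
      !![(0:ℝ), 0, 0, 0; 0, 1/τ, 0, 0; 0, 0, 1/τ, 0; 0, 0, 0, 1/τ] := by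
  intro μ ψ hψ hB
  have hτ' : τ ≠ 0 := ne_of_gt hτ
  have h1 : ψ 1 = 0 := by
    have := congrFun hB 1
    simp [Matrix.mulVec, dotProduct, Fin.sum_univ_four] at this
    rcases this with h | h
    · exact absurd h hτ'
    · exact h
  have h2 : ψ 2 = 0 := by
    have := congrFun hB 2
    simp [Matrix.mulVec, dotProduct, Fin.sum_univ_four] at this
    rcases this with h | h
    · exact absurd h hτ'
    · exact h
  have h3 : ψ 3 = 0 := by
    have := congrFun hB 3
    simp [Matrix.mulVec, dotProduct, Fin.sum_univ_four] at this
    rcases this with h | h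
    · exact absurd h hτ'
    · exact h
  have h0 : ψ 0 ≠ 0 := by
    intro h0
    apply hψ
    funext i
    fin_cases i <;> simp [h0, h1, h2, h3]
  intro hcon
  rcases habc with ha | hb | hc
  · have := congrFun hcon 1
    simp [Matrix.mulVec, dotProduct, Fin.sum_univ_four, Matrix.one_apply,
      Matrix.add_apply, h1, h2, h3, ne_of_gt hs, ha] at this
    exact h0 this
  · have := congrFun hcon 2
    simp [Matrix.mulVec, dotProduct, Fin.sum_univ_four, Matrix.one_apply,
      Matrix.add_apply, h1, h2, h3, ne_of_gt hs, hb] at this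
    exact h0 this
  · have := congrFun hcon 3
    simp [Matrix.mulVec, dotProduct, Fin.sum_univ_four, Matrix.one_apply,
      Matrix.add_apply, h1, h2, h3, ne_of_gt hs, hc] at this
    exact h0 this

/-- For the symmetrized symbols of the linearized isentropic quantum
hydrodynamics system, `K_S(ξ)` is skew-symmetric, `[K_S(ξ)A_S(ξ)]ˢ + B_S ≥ (1/(6τ)) I₄`,
and the pair `(A_S(ξ), B_S)` is genuinely coupled, for every `ξ ≠ 0`. -/
theorem QHD_compensating_symbol (τ Θ₀ ε : ℝ)
    (hτ : 0 < τ) (hΘ₀ : 0 < Θ₀) (hε : 0 < ε)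
    (ξ : Fin 3 → ℝ) (hξ : ξ ≠ 0) :
    let nξ2 := ξ 0 ^ 2 + ξ 1 ^ 2 + ξ 2 ^ 2
    let ω : Fin 3 → ℝ := fun i => ξ i / Real.sqrt nξ2
    let Θ := Θ₀ + (ε ^ 2 / 12) * nξ2
    let AS : Matrix (Fin 4) (Fin 4) ℝ :=
      Real.sqrt Θ • !![0, ω 0, ω 1, ω 2;
                       ω 0, 0, 0, 0;
                       ω 1, 0, 0, 0;
                       ω 2, 0, 0, 0]
    let BS : Matrix (Fin 4) (Fin 4) ℝ :=
      !![0, 0, 0, 0;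
         0, 1 / τ, 0, 0;
         0, 0, 1 / τ, 0;
         0, 0, 0, 1 / τ]
    let KS : Matrix (Fin 4) (Fin 4) ℝ :=
      (1 / (6 * τ * Real.sqrt Θ)) • !![0, ω 0, ω 1, ω 2;
                                       -ω 0, 0, 0, 0;
                                       -ω 1, 0, 0, 0;
                                       -ω 2, 0, 0, 0]
    (KSᵀ = -KS) ∧
    (symPart (KS * AS) + BS - (1 / (6 * τ)) • (1 : Matrix (Fin 4) (Fin 4) ℝ)).PosSemidef ∧
    GenuinelyCoupled AS BS := by
  have h0 : ξ 0 ≠ 0 ∨ ξ 1 ≠ 0 ∨ ξ 2 ≠ 0 := by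
    by_contra h
    push_neg at h
    apply hξ
    funext i
    fin_cases i <;> simp only [Pi.zero_apply] <;>
      [exact h.1; exact h.2.1; exact h.2.2]
  have hn : 0 < ξ 0 ^ 2 + ξ 1 ^ 2 + ξ 2 ^ 2 := by
    rcases h0 with h | h | h <;> positivity
  intro nξ2 ω Θ AS BS KS
  have hΘ : 0 < Θ := by
    have : 0 < (ε ^ 2 / 12) * nξ2 := by positivity
    simp only [Θ]; linarith
  have hs : 0 < Real.sqrt Θ := Real.sqrt_pos.mpr hΘ
  have hsξ : 0 < Real.sqrt nξ2 := Real.sqrt_pos.mpr hn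
  have hω : ω 0 ^ 2 + ω 1 ^ 2 + ω 2 ^ 2 = 1 := by
    simp only [ω, div_pow, Real.sq_sqrt hn.le]
    field_simp
    exact (Real.sq_sqrt hn.le).symm
  refine ⟨?_, ?_, ?_⟩
  · ext i j
    fin_cases i <;> fin_cases j <;>
      simp [KS, Matrix.vecHead, Matrix.vecTail]
  · exact qhd_posSemidef τ (ω 0) (ω 1) (ω 2) (Real.sqrt Θ) hτ hs hω
  · have hωne : ω 0 ≠ 0 ∨ ω 1 ≠ 0 ∨ ω 2 ≠ 0 := by
      rcases h0 with h | h | h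
      · exact Or.inl (div_ne_zero h (ne_of_gt hsξ))
      · exact Or.inr (Or.inl (div_ne_zero h (ne_of_gt hsξ)))
      · exact Or.inr (Or.inr (div_ne_zero h (ne_of_gt hsξ)))
    exact qhd_coupled τ (ω 0) (ω 1) (ω 2) (Real.sqrt Θ) hτ hs hωne
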